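/- Let V : S → ℝ satisfy 0 ≤ V(s) ≤ 1/(1−γ) and the Bellman equation V = r + γ P^π V with r : S → [0,1], and suppose the dispersion factor λ = min V / max V is well defined. Then for all s, s': −(1 − λγ)/(1 − γ) ≤ ρ_r^π(s,s') ≤ max(1, (1 − λ)/(1 − γ)), where ρ_r^π(s,s') = V(s') − (P^π V)(s). In particular if λ = γ then |ρ_r^π(s,s')| ≤ 2. -/
import Mathlib


/-- Bounds on the one-step value deviation in terms of the
dispersion factor `λ = min V / max V`:
`−(1 − λγ)/(1 − γ) ≤ ρ(s,s') ≤ max(1, (1 − λ)/(1 − γ))`, and if `λ = γ`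
then `|ρ(s,s')| ≤ 2`. -/
theorem deviation_bounds_dispersion
    {S : Type*} [Fintype S] [Nonempty S]
    (P : S → S → ℝ) (r : S → ℝ) (V : S → ℝ) (γ : ℝ)
    (hγ : γ ∈ Set.Ioo (0:ℝ) 1)
    (hPnn : ∀ s s', 0 ≤ P s s') (hPsum : ∀ s, ∑ s', P s s' = 1)
    (hr : ∀ s, r s ∈ Set.Icc (0:ℝ) 1)
    (hBell : ∀ s, V s = r s + γ * ∑ s', P s s' * V s')
    (hVnn : ∀ s, 0 ≤ V s) (hVub : ∀ s, V s ≤ 1 / (1 - γ))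
    (hmax : 0 < ⨆ s, V s)
    (lam : ℝ) (hlam : lam = (⨅ t, V t) / (⨆ t, V t)) :
    (∀ s s' : S,
        -(1 - lam * γ) / (1 - γ) ≤ V s' - ∑ z, P s z * V z ∧
        V s' - ∑ z, P s z * V z ≤ max 1 ((1 - lam) / (1 - γ))) ∧
    (lam = γ → ∀ s s' : S, |V s' - ∑ z, P s z * V z| ≤ 2) := by
  obtain ⟨hγ0, hγ1⟩ := hγ
  have h1γ : (0:ℝ) < 1 - γ := by linarith
  set M := ⨆ t, V t with hM
  set m := ⨅ t, V t with hm
  have hbdd : BddAbove (Set.range V) := (Set.finite_range V).bddAbove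
  have hbdd' : BddBelow (Set.range V) := (Set.finite_range V).bddBelow
  have hle : ∀ s, V s ≤ M := fun s => le_ciSup hbdd s
  have hge : ∀ s, m ≤ V s := fun s => ciInf_le hbdd' s
  have hm0 : 0 ≤ m := le_ciInf hVnn
  have hMub : M ≤ 1 / (1 - γ) := ciSup_le hVub
  have hmM : m ≤ M := (hge (Classical.arbitrary S)).trans (hle (Classical.arbitrary S))
  have hlamM : lam * M = m := by
    rw [hlam]; field_simp
  have hlam0 : 0 ≤ lam := by rw [hlam]; exact div_nonneg hm0 hmax.le
  have hlam1 : lam ≤ 1 := by rw [hlam]; exact (div_le_one hmax).mpr hmM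
  have hMγ : M * (1 - γ) ≤ 1 := by
    rw [div_eq_mul_inv, one_mul] at hMub
    calc M * (1 - γ) ≤ (1 - γ)⁻¹ * (1 - γ) := by
          exact mul_le_mul_of_nonneg_right hMub h1γ.le
      _ = 1 := inv_mul_cancel₀ h1γ.ne'
  have hsumle : ∀ s, ∑ z, P s z * V z ≤ M := by
    intro s
    calc ∑ z, P s z * V z ≤ ∑ z, P s z * M :=
          Finset.sum_le_sum (fun z _ => mul_le_mul_of_nonneg_left (hle z) (hPnn s z))
      _ = M := by rw [← Finset.sum_mul, hPsum, one_mul]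
  have hsumge : ∀ s, m ≤ ∑ z, P s z * V z := by
    intro s
    calc m = ∑ z, P s z * m := by rw [← Finset.sum_mul, hPsum, one_mul]
      _ ≤ ∑ z, P s z * V z :=
          Finset.sum_le_sum (fun z _ => mul_le_mul_of_nonneg_left (hge z) (hPnn s z))
  have key : ∀ s s' : S,
      -(1 - lam * γ) / (1 - γ) ≤ V s' - ∑ z, P s z * V z ∧
      V s' - ∑ z, P s z * V z ≤ max 1 ((1 - lam) / (1 - γ)) := by
    intro s s'
    constructor
    · rw [div_le_iff₀ h1γ]
      have h1 := hsumle s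
      have h2 := hge s'
      nlinarith [mul_nonneg hlam0 hγ0.le, mul_nonneg (mul_nonneg hlam0 hγ0.le) (hVnn s'),
        mul_le_mul_of_nonneg_left hMγ (sub_nonneg.mpr hlam1),
        mul_nonneg hlam0 h1γ.le]
    · refine le_trans ?_ (le_max_right _ _)
      have : V s' - ∑ z, P s z * V z ≤ M - m := by
        have := hsumge s; have := hle s'; linarith
      refine this.trans ?_
      have : M - m = (1 - lam) * M := by rw [sub_mul, one_mul, hlamM]
      rw [this, div_eq_mul_inv]
      refine mul_le_mul_of_nonneg_left ?_ (by linarith)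
      rw [div_eq_mul_inv, one_mul] at hMub; exact hMub
  refine ⟨key, ?_⟩
  intro hlg s s'
  obtain ⟨hlo, hhi⟩ := key s s'
  rw [hlg] at hlo hhi
  rw [abs_le]
  constructor
  · refine le_trans ?_ hlo
    rw [neg_div, neg_le_neg_iff, div_le_iff₀ h1γ]
    nlinarith
  · refine hhi.trans ?_
    rw [div_self h1γ.ne', max_self]
    norm_num
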